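/- arXiv:2108.07342 — 2 statements merged into one kernel-verified Lean document; each statement's English description precedes it below -/
import Mathlib

section
/- F is differentiable at every tensor M ∈ ℝ^{S^{T+1}}, and its gradient is ∇F(M) = C(M) + E(M), where E(M)(x_0,…,x_T) = Σ_{i=0}^{T−1} E_i(x_i) with E_i(y) = Σ_{(z,w)∈S×S} ∇W(z − y)ᵀ (w − z + (1/T)[∇W * P_i(M)](z)) · P_{i,i+1}(M)(z,w). -/
open scoped BigOperators Classical

noncomputable section

namespace Stmt0

variable {d T : ℕ} {S : Finset (EuclideanSpace ℝ (Fin d))}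

/-- The `i`-th marginal `P_i(M)(y) = Σ_{x : x_i = y} M(x)` of a tensor on `S^{T+1}`. -/
def marg (M : (Fin (T + 1) → {x // x ∈ S}) → ℝ) (i : Fin (T + 1)) (y : {x // x ∈ S}) : ℝ :=
  ∑ x : Fin (T + 1) → {x // x ∈ S}, if x i = y then M x else 0

/-- The pairwise marginal `P_{i,i+1}(M)(y,z) = Σ_{x : x_i = y, x_{i+1} = z} M(x)`. -/
def margPair (M : (Fin (T + 1) → {x // x ∈ S}) → ℝ) (i : Fin T) (y z : {x // x ∈ S}) : ℝ :=
  ∑ x : Fin (T + 1) → {x // x ∈ S}, if x i.castSucc = y ∧ x i.succ = z then M x else 0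

/-- The discrete convolution `[∇W * P_i(M)](y) = Σ_{z ∈ S} ∇W(y - z) P_i(M)(z)`. -/
def convW (W : EuclideanSpace ℝ (Fin d) → ℝ) (M : (Fin (T + 1) → {x // x ∈ S}) → ℝ)
    (i : Fin (T + 1)) (y : EuclideanSpace ℝ (Fin d)) : EuclideanSpace ℝ (Fin d) :=
  ∑ z : {x // x ∈ S}, marg M i z • gradient W (y - (z : EuclideanSpace ℝ (Fin d)))

/-- The cost tensor
`C(M)(x_0,…,x_T) = Σ_{i=0}^{T-1} (T/2) ‖x_{i+1} - x_i + (1/T)[∇W * P_i(M)](x_i)‖²`. -/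
def costC (W : EuclideanSpace ℝ (Fin d) → ℝ) (M : (Fin (T + 1) → {x // x ∈ S}) → ℝ)
    (x : Fin (T + 1) → {x // x ∈ S}) : ℝ :=
  ∑ i : Fin T, ((T : ℝ) / 2) *
    ‖(x i.succ : EuclideanSpace ℝ (Fin d)) - (x i.castSucc : EuclideanSpace ℝ (Fin d))
      + (1 / (T : ℝ)) • convW W M i.castSucc (x i.castSucc : EuclideanSpace ℝ (Fin d))‖ ^ 2

/-- `F(M) = ⟨C(M), M⟩ = Σ_x C(M)(x) M(x)`. -/
def Ffun (W : EuclideanSpace ℝ (Fin d) → ℝ) (M : (Fin (T + 1) → {x // x ∈ S}) → ℝ) : ℝ :=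
  ∑ x : Fin (T + 1) → {x // x ∈ S}, costC W M x * M x

/-- `E_i(y) = Σ_{(z,w) ∈ S×S} ∇W(z-y)ᵀ (w - z + (1/T)[∇W * P_i(M)](z)) P_{i,i+1}(M)(z,w)`. -/
def Ei (W : EuclideanSpace ℝ (Fin d) → ℝ) (M : (Fin (T + 1) → {x // x ∈ S}) → ℝ)
    (i : Fin T) (y : EuclideanSpace ℝ (Fin d)) : ℝ :=
  ∑ z : {x // x ∈ S}, ∑ w : {x // x ∈ S},
    (inner ℝ (gradient W ((z : EuclideanSpace ℝ (Fin d)) - y))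
      ((w : EuclideanSpace ℝ (Fin d)) - (z : EuclideanSpace ℝ (Fin d))
        + (1 / (T : ℝ)) • convW W M i.castSucc (z : EuclideanSpace ℝ (Fin d))) : ℝ)
    * margPair M i z w

/-- `E(M)(x_0,…,x_T) = Σ_{i=0}^{T-1} E_i(x_i)`. -/
def Etens (W : EuclideanSpace ℝ (Fin d) → ℝ) (M : (Fin (T + 1) → {x // x ∈ S}) → ℝ)
    (x : Fin (T + 1) → {x // x ∈ S}) : ℝ :=
  ∑ i : Fin T, Ei W M i (x i.castSucc : EuclideanSpace ℝ (Fin d))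

def margCLM (i : Fin (T + 1)) (y : {x // x ∈ S}) :
    EuclideanSpace ℝ (Fin (T + 1) → {x // x ∈ S}) →L[ℝ] ℝ :=
  ∑ x : Fin (T + 1) → {x // x ∈ S}, if x i = y then EuclideanSpace.proj x else 0

lemma margCLM_apply (i : Fin (T + 1)) (y : {x // x ∈ S})
    (N : EuclideanSpace ℝ (Fin (T + 1) → {x // x ∈ S})) :
    margCLM i y N = marg N i y := by
  simp [margCLM, marg, ContinuousLinearMap.sum_apply,
    apply_ite (fun g : EuclideanSpace ℝ (Fin (T + 1) → {x // x ∈ S}) →L[ℝ] ℝ => g N)]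

def convCLM (W : EuclideanSpace ℝ (Fin d) → ℝ) (i : Fin (T + 1)) (y : EuclideanSpace ℝ (Fin d)) :
    EuclideanSpace ℝ (Fin (T + 1) → {x // x ∈ S}) →L[ℝ] EuclideanSpace ℝ (Fin d) :=
  ∑ z : {x // x ∈ S}, (margCLM i z).smulRight (gradient W (y - (z : EuclideanSpace ℝ (Fin d))))

lemma convCLM_apply (W : EuclideanSpace ℝ (Fin d) → ℝ) (i : Fin (T + 1))
    (y : EuclideanSpace ℝ (Fin d)) (N : EuclideanSpace ℝ (Fin (T + 1) → {x // x ∈ S})) :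
    convCLM W i y N = convW W N i y := by
  simp [convCLM, convW, margCLM_apply, ContinuousLinearMap.sum_apply]

lemma marg_single (i : Fin (T + 1)) (y : Fin (T + 1) → {x // x ∈ S}) (z : {x // x ∈ S}) :
    marg (EuclideanSpace.single y (1:ℝ)) i z = if y i = z then 1 else 0 := by
  unfold marg
  rw [Finset.sum_eq_single y]
  · simp [EuclideanSpace.single_apply]
  · intro b _ hb; simp [EuclideanSpace.single_apply, hb]
  · simp

lemma convW_single (W : EuclideanSpace ℝ (Fin d) → ℝ) (i : Fin (T + 1))
    (y : Fin (T + 1) → {x // x ∈ S}) (v : EuclideanSpace ℝ (Fin d)) :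
    convW W (EuclideanSpace.single y (1:ℝ)) i v
      = gradient W (v - (y i : EuclideanSpace ℝ (Fin d))) := by
  unfold convW
  simp only [marg_single]
  simp [ite_smul, Finset.sum_ite_eq]


/-- `F` is differentiable at every tensor `M`, with gradient
`∇F(M) = C(M) + E(M)`. -/
theorem statement_0 (hT : 1 ≤ T) (hS : S.Nonempty)
    (W : EuclideanSpace ℝ (Fin d) → ℝ) (hW : ContDiff ℝ 1 W)
    (M : EuclideanSpace ℝ (Fin (T + 1) → {x // x ∈ S})) :
    DifferentiableAt ℝ
      (fun N : EuclideanSpace ℝ (Fin (T + 1) → {x // x ∈ S}) => Ffun W N) M ∧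
    ∀ x : Fin (T + 1) → {x // x ∈ S},
      gradient (fun N : EuclideanSpace ℝ (Fin (T + 1) → {x // x ∈ S}) => Ffun W N) M x
        = costC W M x + Etens W M x := by
  classical
  have hT0 : (T : ℝ) ≠ 0 := Nat.cast_ne_zero.mpr (by omega)
  set p : Fin T → (Fin (T + 1) → {x // x ∈ S}) → EuclideanSpace ℝ (Fin d) := fun i x =>
    (x i.succ : EuclideanSpace ℝ (Fin d)) - (x i.castSucc : EuclideanSpace ℝ (Fin d))
      + (1 / (T : ℝ)) • convCLM W i.castSucc (x i.castSucc : EuclideanSpace ℝ (Fin d)) M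
    with hp_def
  have hp : ∀ (i : Fin T) (x : Fin (T + 1) → {x // x ∈ S}),
      p i x = (x i.succ : EuclideanSpace ℝ (Fin d)) - (x i.castSucc : EuclideanSpace ℝ (Fin d))
        + (1 / (T : ℝ)) • convW W M i.castSucc (x i.castSucc : EuclideanSpace ℝ (Fin d)) := by
    intro i x; rw [hp_def]; simp [convCLM_apply]
  set Dc : (Fin (T + 1) → {x // x ∈ S}) →
      (EuclideanSpace ℝ (Fin (T + 1) → {x // x ∈ S}) →L[ℝ] ℝ) := fun x => ∑ i : Fin T,
    ((T : ℝ) / 2) • ((fderivInnerCLM ℝ (p i x, p i x)).comp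
      (((1 / (T : ℝ)) • convCLM W i.castSucc (x i.castSucc : EuclideanSpace ℝ (Fin d))).prod
       ((1 / (T : ℝ)) • convCLM W i.castSucc (x i.castSucc : EuclideanSpace ℝ (Fin d))))) with hDc_def
  have hlin : ∀ (i : Fin T) (x : Fin (T + 1) → {x // x ∈ S}), HasFDerivAt
      (fun N : EuclideanSpace ℝ (Fin (T + 1) → {x // x ∈ S}) =>
        (x i.succ : EuclideanSpace ℝ (Fin d)) - (x i.castSucc : EuclideanSpace ℝ (Fin d))
        + (1 / (T : ℝ)) • convCLM W i.castSucc (x i.castSucc : EuclideanSpace ℝ (Fin d)) N)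
      ((1 / (T : ℝ)) • convCLM W i.castSucc (x i.castSucc : EuclideanSpace ℝ (Fin d))) M := by
    intro i x
    exact ((convCLM W i.castSucc _).hasFDerivAt.const_smul (1 / (T : ℝ))).const_add _
  have hcost : ∀ x : Fin (T + 1) → {x // x ∈ S},
      HasFDerivAt (fun N : EuclideanSpace ℝ (Fin (T + 1) → {x // x ∈ S}) => costC W N x)
        (Dc x) M := by
    intro x
    have h2 : (fun N : EuclideanSpace ℝ (Fin (T + 1) → {x // x ∈ S}) => costC W N x)
        = fun N : EuclideanSpace ℝ (Fin (T + 1) → {x // x ∈ S}) => ∑ i : Fin T, ((T : ℝ) / 2) *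
        (inner ℝ ((x i.succ : EuclideanSpace ℝ (Fin d)) - (x i.castSucc : EuclideanSpace ℝ (Fin d))
          + (1 / (T : ℝ)) • convCLM W i.castSucc (x i.castSucc : EuclideanSpace ℝ (Fin d)) N)
          ((x i.succ : EuclideanSpace ℝ (Fin d)) - (x i.castSucc : EuclideanSpace ℝ (Fin d))
          + (1 / (T : ℝ)) • convCLM W i.castSucc (x i.castSucc : EuclideanSpace ℝ (Fin d)) N) : ℝ) := by
      funext N
      unfold costC
      refine Finset.sum_congr rfl fun i _ => ?_
      rw [convCLM_apply, real_inner_self_eq_norm_sq]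
    rw [h2]
    exact HasFDerivAt.fun_sum fun i _ => ((hlin i x).inner ℝ (hlin i x)).const_mul ((T : ℝ) / 2)
  have heval : ∀ x : Fin (T + 1) → {x // x ∈ S},
      HasFDerivAt (fun N : EuclideanSpace ℝ (Fin (T + 1) → {x // x ∈ S}) => (N x : ℝ))
        (EuclideanSpace.proj x : EuclideanSpace ℝ (Fin (T + 1) → {x // x ∈ S}) →L[ℝ] ℝ) M := by
    intro x
    exact (EuclideanSpace.proj x : EuclideanSpace ℝ (Fin (T + 1) → {x // x ∈ S}) →L[ℝ] ℝ).hasFDerivAt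
  set L : EuclideanSpace ℝ (Fin (T + 1) → {x // x ∈ S}) →L[ℝ] ℝ :=
    ∑ x : Fin (T + 1) → {x // x ∈ S}, (costC W M x • EuclideanSpace.proj x + M x • Dc x)
    with hL_def
  have hF : HasFDerivAt (fun N : EuclideanSpace ℝ (Fin (T + 1) → {x // x ∈ S}) => Ffun W N)
      L M := by
    have hterm : ∀ x : Fin (T + 1) → {x // x ∈ S},
        HasFDerivAt (fun N : EuclideanSpace ℝ (Fin (T + 1) → {x // x ∈ S}) =>
          costC W N x * N x) (costC W M x • EuclideanSpace.proj x + M x • Dc x) M := by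
      intro x
      exact (hcost x).mul (heval x)
    have h3 : HasFDerivAt (fun N : EuclideanSpace ℝ (Fin (T + 1) → {x // x ∈ S}) =>
        ∑ x : Fin (T + 1) → {x // x ∈ S}, costC W N x * N x) L M :=
      HasFDerivAt.fun_sum fun x _ => hterm x
    exact h3
  refine ⟨hF.differentiableAt, ?_⟩
  have hDc_single : ∀ (y x : Fin (T + 1) → {x // x ∈ S}),
      Dc x (EuclideanSpace.single y (1:ℝ))
      = ∑ i : Fin T, (inner ℝ (gradient W ((x i.castSucc : EuclideanSpace ℝ (Fin d))
          - (y i.castSucc : EuclideanSpace ℝ (Fin d)))) (p i x) : ℝ) := by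
    intro y x
    rw [hDc_def]
    simp only [ContinuousLinearMap.sum_apply, ContinuousLinearMap.smul_apply,
      ContinuousLinearMap.comp_apply, ContinuousLinearMap.prod_apply, smul_eq_mul,
      fderivInnerCLM_apply]
    refine Finset.sum_congr rfl fun i _ => ?_
    rw [convCLM_apply, convW_single]
    rw [real_inner_smul_right, real_inner_smul_left,
      real_inner_comm (p i x) (gradient W ((x i.castSucc : EuclideanSpace ℝ (Fin d))
        - (y i.castSucc : EuclideanSpace ℝ (Fin d))))]
    field_simp
    ring
  have hEi : ∀ (i : Fin T) (v : EuclideanSpace ℝ (Fin d)), Ei W M i v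
      = ∑ x : Fin (T + 1) → {x // x ∈ S},
        (inner ℝ (gradient W ((x i.castSucc : EuclideanSpace ℝ (Fin d)) - v)) (p i x) : ℝ) * M x := by
    intro i v
    unfold Ei margPair
    simp only [Finset.mul_sum, mul_ite, mul_zero]
    rw [Finset.sum_congr rfl fun z (_ : z ∈ Finset.univ) => Finset.sum_comm,
      Finset.sum_comm]
    refine Finset.sum_congr rfl fun x _ => ?_
    rw [hp]
    simp only [ite_and, Finset.sum_ite_irrel, Finset.sum_const_zero, Finset.sum_ite_eq,
      Finset.mem_univ, if_true]
  have key : ∀ y : Fin (T + 1) → {x // x ∈ S},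
      L (EuclideanSpace.single y (1:ℝ)) = costC W M y + Etens W M y := by
    intro y
    rw [hL_def]
    simp only [ContinuousLinearMap.sum_apply, ContinuousLinearMap.add_apply,
      ContinuousLinearMap.smul_apply, smul_eq_mul]
    rw [Finset.sum_add_distrib]
    congr 1
    · simp [EuclideanSpace.single_apply, mul_ite, PiLp.proj_apply]
    · rw [Etens]
      calc (∑ x : Fin (T + 1) → {x // x ∈ S}, M x * Dc x (EuclideanSpace.single y (1:ℝ)))
          = ∑ x : Fin (T + 1) → {x // x ∈ S}, M x * ∑ i : Fin T,
            (inner ℝ (gradient W ((x i.castSucc : EuclideanSpace ℝ (Fin d))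
              - (y i.castSucc : EuclideanSpace ℝ (Fin d)))) (p i x) : ℝ) := by
            refine Finset.sum_congr rfl fun x _ => by rw [hDc_single]
        _ = ∑ i : Fin T, ∑ x : Fin (T + 1) → {x // x ∈ S},
            (inner ℝ (gradient W ((x i.castSucc : EuclideanSpace ℝ (Fin d))
              - (y i.castSucc : EuclideanSpace ℝ (Fin d)))) (p i x) : ℝ) * M x := by
            rw [Finset.sum_comm]
            refine Finset.sum_congr rfl fun x _ => ?_
            rw [Finset.mul_sum]
            exact Finset.sum_congr rfl fun i _ => mul_comm _ _
        _ = ∑ i : Fin T, Ei W M i (y i.castSucc : EuclideanSpace ℝ (Fin d)) := by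
            refine Finset.sum_congr rfl fun i _ => ?_
            rw [hEi]
  intro x
  have hg : gradient (fun N : EuclideanSpace ℝ (Fin (T + 1) → {x // x ∈ S}) => Ffun W N) M
      = (InnerProductSpace.toDual ℝ (EuclideanSpace ℝ (Fin (T + 1) → {x // x ∈ S}))).symm L := by
    unfold gradient
    rw [hF.fderiv]
  rw [hg, ← key x]
  have h5 := InnerProductSpace.toDual_symm_apply (𝕜 := ℝ)
    (E := EuclideanSpace ℝ (Fin (T + 1) → {x // x ∈ S}))
    (x := EuclideanSpace.single x (1:ℝ)) (y := L)
  rw [← h5, EuclideanSpace.inner_single_right]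
  simp

end Stmt0
end
end

section
/- Suppose Π : [0,1] → ℝ^{d×d} is differentiable, symmetric-matrix valued, and satisfies the Riccati equation Π̇(t) − Π(t) a Π(t) + Q + ĀᵀΠ(t) + Π(t)Ā = 0 for all t ∈ [0,1], and suppose Σ : [0,1] → ℝ^{d×d} is differentiable, with Σ(t) invertible for every t, and satisfies the Lyapunov equation Σ̇(t) − (Ā − aΠ(t))Σ(t) − Σ(t)(Ā − aΠ(t))ᵀ − ε a = 0 for all t ∈ [0,1]. Then H(t) := ε Σ(t)⁻¹ − Π(t) satisfies the Riccati equation Ḣ(t) + H(t) a H(t) − Q + ĀᵀH(t) + H(t)Ā = 0 for all t ∈ [0,1]. -/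
open Matrix

noncomputable section

section aux
attribute [local instance] Matrix.linftyOpNormedRing Matrix.linftyOpNormedAlgebra

lemma hasDerivAt_matrix {d : ℕ} {A : ℝ → Matrix (Fin d) (Fin d) ℝ}
    {A' : Matrix (Fin d) (Fin d) ℝ} {t : ℝ}
    (hA : ∀ i j, HasDerivAt (fun s => A s i j) (A' i j) t) :
    HasDerivAt A A' t := by
  have h : HasDerivAt (fun s => ∑ i : Fin d, ∑ j : Fin d, A s i j • Matrix.single i j (1:ℝ))
      (∑ i : Fin d, ∑ j : Fin d, A' i j • Matrix.single i j (1:ℝ)) t :=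
    HasDerivAt.fun_sum fun i _ => HasDerivAt.fun_sum fun j _ => (hA i j).smul_const _
  convert h using 2 with s
  · simp only [Matrix.smul_single, smul_eq_mul, mul_one]
    exact matrix_eq_sum_single (A s)
  · simp only [Matrix.smul_single, smul_eq_mul, mul_one]
    exact matrix_eq_sum_single A'

lemma hasDerivAt_matrix_inv {d : ℕ} {A : ℝ → Matrix (Fin d) (Fin d) ℝ}
    {A' : Matrix (Fin d) (Fin d) ℝ} {t : ℝ}
    (hA : ∀ i j, HasDerivAt (fun s => A s i j) (A' i j) t)
    (hU : IsUnit (A t)) (i j : Fin d) :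
    HasDerivAt (fun s => (A s)⁻¹ i j) ((-((A t)⁻¹ * A' * (A t)⁻¹)) i j) t := by
  have h1 : HasDerivAt A A' t := hasDerivAt_matrix hA
  have h2 : HasFDerivAt Ring.inverse
      (-ContinuousLinearMap.mulLeftRight ℝ _ (↑hU.unit⁻¹) (↑hU.unit⁻¹)) (A t) := by
    simpa using hasFDerivAt_ringInverse (𝕜 := ℝ) hU.unit
  have h3 : HasDerivAt (fun s => Ring.inverse (A s))
      (-((A t)⁻¹ * A' * (A t)⁻¹)) t := by
    have := h2.comp_hasDerivAt t h1
    simp only [Function.comp_def, ContinuousLinearMap.neg_apply, ContinuousLinearMap.mulLeftRight_apply, Matrix.coe_units_inv, hU.unit_spec, mul_assoc] at this ⊢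
    exact this
  have h4 : HasDerivAt (fun s => (A s)⁻¹) (-((A t)⁻¹ * A' * (A t)⁻¹)) t := by
    simpa [Matrix.nonsing_inv_eq_ringInverse] using h3
  exact (LinearMap.toContinuousLinearMap
    (Matrix.entryLinearMap ℝ ℝ i j)).hasFDerivAt.comp_hasDerivAt t h4

end aux

/-- If the symmetric-matrix valued `Π` solves the Riccati equation
`Π̇ - Π a Π + Q + ĀᵀΠ + ΠĀ = 0` on `[0,1]` and the invertible-matrix valued `Σ` solves
the Lyapunov equation `Σ̇ - (Ā - aΠ)Σ - Σ(Ā - aΠ)ᵀ - εa = 0` on `[0,1]`, where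
`a = σσᵀ`, then `H(t) = ε Σ(t)⁻¹ - Π(t)` satisfies the Riccati equation
`Ḣ + H a H - Q + ĀᵀH + HĀ = 0` on `[0,1]` (derivatives are taken entrywise). -/
theorem statement_5 {d p : ℕ} (ε : ℝ) (hε : 0 < ε)
    (σm : Matrix (Fin d) (Fin p) ℝ)
    (Abar Q : Matrix (Fin d) (Fin d) ℝ) (hQ : Q.IsSymm)
    (Pm Pm' Sm Sm' : ℝ → Matrix (Fin d) (Fin d) ℝ)
    (hPderiv : ∀ t ∈ Set.Icc (0 : ℝ) 1, ∀ i j, HasDerivAt (fun s => Pm s i j) (Pm' t i j) t)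
    (hPsymm : ∀ t ∈ Set.Icc (0 : ℝ) 1, (Pm t).IsSymm)
    (hRiccati : ∀ t ∈ Set.Icc (0 : ℝ) 1,
      Pm' t - Pm t * (σm * σmᵀ) * Pm t + Q + Abarᵀ * Pm t + Pm t * Abar = 0)
    (hSderiv : ∀ t ∈ Set.Icc (0 : ℝ) 1, ∀ i j, HasDerivAt (fun s => Sm s i j) (Sm' t i j) t)
    (hSinv : ∀ t ∈ Set.Icc (0 : ℝ) 1, IsUnit (Sm t))
    (hLyapunov : ∀ t ∈ Set.Icc (0 : ℝ) 1,
      Sm' t - (Abar - (σm * σmᵀ) * Pm t) * Sm t - Sm t * (Abar - (σm * σmᵀ) * Pm t)ᵀ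
        - ε • (σm * σmᵀ) = 0) :
    ∃ H' : ℝ → Matrix (Fin d) (Fin d) ℝ,
      (∀ t ∈ Set.Icc (0 : ℝ) 1, ∀ i j,
        HasDerivAt (fun s => (ε • (Sm s)⁻¹ - Pm s) i j) (H' t i j) t) ∧
      ∀ t ∈ Set.Icc (0 : ℝ) 1,
        H' t + (ε • (Sm t)⁻¹ - Pm t) * (σm * σmᵀ) * (ε • (Sm t)⁻¹ - Pm t) - Q
          + Abarᵀ * (ε • (Sm t)⁻¹ - Pm t) + (ε • (Sm t)⁻¹ - Pm t) * Abar = 0 := by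
  
  set a : Matrix (Fin d) (Fin d) ℝ := σm * σmᵀ with ha
  refine ⟨fun t => ε • (-((Sm t)⁻¹ * Sm' t * (Sm t)⁻¹)) - Pm' t, ?_, ?_⟩
  · intro t ht i j
    have hinv := hasDerivAt_matrix_inv (hSderiv t ht) (hSinv t ht) i j
    have := (hinv.const_smul ε).sub (hPderiv t ht i j)
    simpa [Pi.sub_def, Pi.smul_def, Matrix.sub_apply, Matrix.smul_apply] using this
  · intro t ht
    set N := (Sm t)⁻¹ with hN
    set S := Sm t with hS
    set P := Pm t with hP
    have hdet : IsUnit S.det := (Matrix.isUnit_iff_isUnit_det _).mp (hSinv t ht)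
    have h1 : S * N = 1 := Matrix.mul_nonsing_inv _ hdet
    have h2 : N * S = 1 := Matrix.nonsing_inv_mul _ hdet
    have h2' : ∀ B : Matrix (Fin d) (Fin d) ℝ, N * (S * B) = B := fun B => by
      rw [← mul_assoc, h2, one_mul]
    have haT : aᵀ = a := by rw [ha, transpose_mul, transpose_transpose]
    have hPT : Pᵀ = P := hPsymm t ht
    have hXT : (Abar - a * P)ᵀ = Abarᵀ - P * a := by
      rw [transpose_sub, transpose_mul, hPT, haT]
    have hS' : Sm' t = (Abar - a * P) * S + (S * (Abarᵀ - P * a) + ε • a) := by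
      have h := hLyapunov t ht
      rw [hXT] at h
      rw [← sub_eq_zero, ← h]
      abel
    have hP' : Pm' t = P * a * P - Q - Abarᵀ * P - P * Abar := by
      have h := hRiccati t ht
      rw [← sub_eq_zero, ← h]
      abel
    have key : N * Sm' t * N = N * (Abar - a * P) + ((Abarᵀ - P * a) * N + ε • (N * (a * N))) := by
      rw [hS']
      simp only [mul_add, add_mul, Matrix.mul_smul, Matrix.smul_mul, mul_assoc, h1, mul_one, h2']
    beta_reduce
    rw [← hS, ← hN, key, hP']
    simp only [mul_sub, sub_mul, Matrix.mul_smul, Matrix.smul_mul, smul_sub, sub_mul,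
      smul_smul, mul_assoc, smul_add, hXT]
    module
end
end
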